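/- A recursively presentable group G is *-universal if and only if the word problem of G is not a universal ceer but the word problem of G * (ℤ/2ℤ) is a universal ceer. -/

import Mathlib

/-- A predicate on a primcodable type is computably enumerable (c.e.). -/
def CePred {α : Type} [Primcodable α] (p : α → Prop) : Prop :=
  Partrec fun a => Part.assert (p a) fun _ => Part.some ()

/-- The `e`-th c.e. set `W_e`, i.e. the domain of the `e`-th partial computable function. -/
def WSet (e : ℕ) : Set ℕ :=
  {n | ((Denumerable.ofNat Nat.Partrec.Code e).eval n).Dom}

/-- A ceer: a computably enumerable equivalence relation on ℕ. -/
def Ceer (E : ℕ → ℕ → Prop) : Prop :=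
  Equivalence E ∧ CePred fun p : ℕ × ℕ => E p.1 p.2

/-- Computable reducibility of binary relations (on coded types). -/
def Reduction {α β : Type} [Primcodable α] [Primcodable β]
    (E : α → α → Prop) (R : β → β → Prop) : Prop :=
  ∃ f : α → β, Computable f ∧ ∀ a b, E a b ↔ R (f a) (f b)

/-- A relation is universal if every ceer computably reduces to it. -/
def Universal {β : Type} [Primcodable β] (R : β → β → Prop) : Prop :=
  ∀ E : ℕ → ℕ → Prop, Ceer E → Reduction E R

/-- The word problem of a group `G` with respect to a coding `ν` of words. -/
def WP {α G : Type} (ν : α → G) : α → α → Prop := fun a b => ν a = ν b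


open Monoid

/-- Evaluation of a word over the generators of `G` and `H` in the free product `G ∗ H`:
a letter `Sum.inl a` denotes the generator of `G` coded by `a`, and `Sum.inr n` denotes the
generator of `H` coded by `n`. -/
def freeEval {α G H : Type} [Group G] [Group H] (ν : α → G) (μ : ℕ → H)
    (l : List (α ⊕ ℕ)) : Coprod G H :=
  (l.map (Sum.elim (fun a => Coprod.inl (ν a)) fun n => Coprod.inr (μ n))).prod

/-- `G` (recursively presented via the coding `ν`) is ∗-universal: its word problem is not a
universal ceer, yet for every nontrivial group `H` the word problem of `G ∗ H` is universal. -/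
def StarUniversal {α G : Type} [Primcodable α] [Group G] (ν : α → G) : Prop :=
  ¬ Universal (WP ν) ∧
  ∀ (H : Type) (_ : Group H), Nontrivial H →
    ∀ μ : ℕ → H, Function.Surjective μ → Universal (WP (freeEval ν μ))

namespace SU
open Monoid Coprod

variable {G K : Type} [Group G] [Group K]

def flipPow : ℕ → Bool → Bool
  | 0, b => b
  | n+1, b => flipPow n (!b)

lemma flipPow_not (n : ℕ) (b : Bool) : flipPow n (!b) = !(flipPow n b) := by
  induction n generalizing b with
  | zero => rfl
  | succ n ih => simp [flipPow, ih]

lemma flipPow_flipPow (n : ℕ) (b : Bool) : flipPow n (flipPow n b) = b := by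
  induction n generalizing b with
  | zero => rfl
  | succ n ih => simp [flipPow, flipPow_not, ih]

def QW (s : Bool → K) : Bool → List G → Coprod G K
  | _, [] => 1
  | b, g :: L => inr (s b) * inl g * QW s (!b) L

structure Good (s : Bool → K) : Prop where
  ne : ∀ b, s b ≠ 1
  mul : ∀ b, s b * s (!b) = 1

lemma Good.inv_eq {s : Bool → K} (hs : Good s) (b : Bool) : (s b)⁻¹ = s (!b) :=
  inv_eq_of_mul_eq_one_right (hs.mul b)

lemma QW_append (s : Bool → K) (b : Bool) (u v : List G) :
    QW s b (u ++ v) = QW s b u * QW s (flipPow u.length b) v := by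
  induction u generalizing b with
  | nil => simp [QW, flipPow]
  | cons g u ih =>
      show QW s b (g :: (u ++ v)) = _
      rw [QW, ih (!b)]
      simp [QW, flipPow, mul_assoc]

lemma QW_concat (s : Bool → K) (b : Bool) (u : List G) (y : G) :
    QW s b (u ++ [y]) = QW s b u * inr (s (flipPow u.length b)) * inl y := by
  rw [QW_append]; simp [QW, mul_assoc]

lemma QW_concat_mul_inl (s : Bool → K) (b : Bool) (u : List G) (y x : G) :
    QW s b (u ++ [y]) * inl x = QW s b (u ++ [y * x]) := by
  rw [QW_concat, QW_concat]
  simp [mul_assoc, ← map_mul]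

lemma QW_inv {s : Bool → K} (hs : Good s) :
    ∀ (u : List G) (y g₀ : G) (b : Bool),
      (inl g₀ * QW s b (u ++ [y]))⁻¹
        = inl y⁻¹ * QW s (!(flipPow u.length b)) ((u.reverse.map (·⁻¹)) ++ [g₀⁻¹]) := by
  intro u
  induction u with
  | nil =>
      intro y g₀ b
      show (inl g₀ * QW s b [y])⁻¹ = inl y⁻¹ * QW s (!b) [g₀⁻¹]
      rw [show (QW s b [y] : Coprod G K) = inr (s b) * inl y * 1 from rfl,
        show (QW s (!b) [g₀⁻¹] : Coprod G K) = inr (s (!b)) * inl g₀⁻¹ * 1 from rfl]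
      rw [← hs.inv_eq b]
      simp [mul_inv_rev, mul_assoc]
  | cons g u ih =>
      intro y g₀ b
      show (inl g₀ * QW s b (g :: (u ++ [y])))⁻¹ = _
      rw [QW]
      have h1 : inl g₀ * (inr (s b) * inl g * QW s (!b) (u ++ [y]))
          = (inl g₀ * inr (s b)) * (inl g * QW s (!b) (u ++ [y])) := by
        simp [mul_assoc]
      rw [h1, mul_inv_rev, ih y g (!b), mul_inv_rev]
      rw [← map_inv, ← map_inv, hs.inv_eq b]
      have h3 : ((g :: u).reverse.map (·⁻¹)) ++ [g₀⁻¹]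
          = ((u.reverse.map (·⁻¹)) ++ [g⁻¹]) ++ [g₀⁻¹] := by simp
      rw [h3, QW_concat s _ ((u.reverse.map (·⁻¹)) ++ [g⁻¹]) g₀⁻¹]
      have h4 : flipPow ((u.reverse.map (·⁻¹)) ++ [g⁻¹]).length (!(flipPow (g :: u).length b))
          = !b := by
        simp only [List.length_append, List.length_map, List.length_reverse, List.length_cons,
          List.length_nil]
        show flipPow (u.length + 1) (!(flipPow (u.length + 1) b)) = !b
        rw [flipPow_not, flipPow_flipPow]
      have h2 : (!(flipPow u.length !b)) = !(flipPow (g :: u).length b) := rfl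
      rw [h2, h4]
      simp [mul_assoc]

lemma QW_red0 {s : Bool → K} (hs : Good s) (b : Bool) (x : G) (v : List G) :
    QW s b ((1 : G) :: x :: v) = inl x * QW s b v := by
  show inr (s b) * inl (1 : G) * (inr (s (!b)) * inl x * QW s (!(!b)) v) = _
  rw [Bool.not_not, map_one]
  have : inr (s b) * 1 * (inr (s (!b)) * inl x * QW s b v)
      = inr (s b * s (!b)) * (inl x * QW s b v) := by
    simp [map_mul, mul_assoc]
  rw [this, hs.mul b, map_one, one_mul]

lemma QW_red1 {s : Bool → K} (hs : Good s) (b : Bool) (u : List G) (y x : G) (v : List G) :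
    QW s b (u ++ y :: (1 : G) :: x :: v) = QW s b (u ++ (y * x) :: v) := by
  rw [QW_append, QW_append]
  congr 1
  set c := flipPow u.length b
  show inr (s c) * inl y * QW s (!c) ((1:G) :: x :: v) = inr (s c) * inl (y * x) * QW s (!c) v
  rw [QW_red0 hs, map_mul]
  simp [mul_assoc]
def M2 (G K : Type) : Bool → Type := fun i => cond i G K

instance : (i : Bool) → Group (M2 G K i) := fun i => by
  cases i
  · show Group K; infer_instance
  · show Group G; infer_instance

/-- The canonical hom from the binary coproduct to the indexed coproduct. -/
noncomputable def psi (G K : Type) [Group G] [Group K] : Coprod G K →* CoprodI (M2 G K) :=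
  Coprod.lift (show G →* CoprodI (M2 G K) from CoprodI.of (M := M2 G K) (i := true))
    (show K →* CoprodI (M2 G K) from CoprodI.of (M := M2 G K) (i := false))

lemma psi_inl (g : G) :
    psi G K (inl g) = CoprodI.of (i := true) (show M2 G K true from g) := by
  rfl

lemma psi_inr (k : K) :
    psi G K (inr k) = CoprodI.of (i := false) (show M2 G K false from k) := by
  rfl

lemma word_prod_injective :
    Function.Injective (CoprodI.Word.prod (M := M2 G K)) := by
  classical
  exact Function.LeftInverse.injective (g := ⇑(CoprodI.Word.equiv (M := M2 G K)))
    (CoprodI.Word.equiv (M := M2 G K)).right_inv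
section Letters
variable [DecidableEq G]

def letters (s : Bool → K) : Bool → List G → List ((i : Bool) × M2 G K i)
  | _, [] => []
  | b, g :: L =>
      if g = 1 then ⟨false, s b⟩ :: letters s (!b) L
      else ⟨false, s b⟩ :: ⟨true, g⟩ :: letters s (!b) L

lemma letters_prod (s : Bool → K) (b : Bool) (L : List G) :
    ((letters (G := G) s b L).map fun l => CoprodI.of (M := M2 G K) l.2).prod
      = psi G K (QW s b L) := by
  induction L generalizing b with
  | nil => simp [letters, QW]
  | cons g L ih =>
      by_cases hg : g = 1
      · subst hg
        rw [show letters (G := G) s b ((1:G) :: L) = ⟨false, s b⟩ :: letters s (!b) L from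
          if_pos rfl]
        rw [show (QW s b ((1:G) :: L) : Coprod G K) = inr (s b) * inl 1 * QW s (!b) L from rfl]
        simp only [List.map_cons, List.prod_cons, map_mul, map_one, psi_inr, ih]
        simp
      · rw [show letters (G := G) s b (g :: L)
            = ⟨false, s b⟩ :: ⟨true, g⟩ :: letters s (!b) L from if_neg hg]
        rw [show (QW s b (g :: L) : Coprod G K) = inr (s b) * inl g * QW s (!b) L from rfl]
        simp only [List.map_cons, List.prod_cons, map_mul, psi_inr, psi_inl, ih]
        simp [mul_assoc]

lemma letters_ne_nil (s : Bool → K) (b : Bool) (g : G) (L : List G) :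
    letters (G := G) s b (g :: L) ≠ [] := by
  unfold letters; split <;> simp

lemma letters_head (s : Bool → K) (b : Bool) (g : G) (L : List G) :
    ∃ r, letters (G := G) s b (g :: L) = ⟨false, s b⟩ :: r := by
  unfold letters; split
  · exact ⟨_, rfl⟩
  · exact ⟨_, rfl⟩

lemma letters_ne_one {s : Bool → K} (hs : Good s) (b : Bool) (L : List G) :
    ∀ l ∈ letters (G := G) s b L, l.2 ≠ (1 : M2 G K l.1) := by
  induction L generalizing b with
  | nil => simp [letters]
  | cons g L ih =>
      intro l hl
      by_cases hg : g = 1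
      · rw [show letters (G := G) s b (g :: L) = ⟨false, s b⟩ :: letters s (!b) L from
          if_pos hg] at hl
        simp only [List.mem_cons] at hl
        rcases hl with rfl | hl
        · exact hs.ne b
        · exact ih (!b) l hl
      · rw [show letters (G := G) s b (g :: L)
            = ⟨false, s b⟩ :: ⟨true, g⟩ :: letters s (!b) L from if_neg hg] at hl
        simp only [List.mem_cons] at hl
        rcases hl with rfl | rfl | hl
        · exact hs.ne b
        · exact hg
        · exact ih (!b) l hl

lemma letters_chain (s : Bool → K) (b : Bool) (L : List G)
    (hint : ∀ y ∈ L.dropLast, y ≠ 1) :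
    List.Chain' (fun l l' => l.1 ≠ l'.1) (letters (G := G) s b L) := by
  induction L generalizing b with
  | nil => simp [letters, List.Chain']
  | cons g L ih =>
      cases L with
      | nil =>
          unfold letters; split
          · simp [letters, List.Chain']
          · simp [letters, List.Chain']
      | cons g' L' =>
          have hg : g ≠ 1 := hint g (by simp)
          rw [show letters (G := G) s b (g :: g' :: L')
              = ⟨false, s b⟩ :: ⟨true, g⟩ :: letters s (!b) (g' :: L') from if_neg hg]
          obtain ⟨r, hr⟩ := letters_head (G := G) (K := K) s (!b) g' L'
          have hchain : List.Chain' (fun l l' => l.1 ≠ l'.1) (letters (G := G) s (!b) (g' :: L')) := by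
            apply ih
            intro y hy
            exact hint y (by simpa using Or.inr hy)
          rw [hr] at hchain ⊢
          refine List.IsChain.cons_cons (by simp) (List.IsChain.cons_cons (by simp) hchain)

end Letters
theorem QW_ne_one {s : Bool → K} (hs : Good s) (g₀ : G) (b : Bool) (L : List G)
    (hL : L ≠ []) (hint : ∀ y ∈ L.dropLast, y ≠ 1) :
    inl g₀ * QW s b L ≠ 1 := by
  classical
  obtain ⟨g, L', rfl⟩ : ∃ g L', L = g :: L' := by
    cases L with
    | nil => exact absurd rfl hL
    | cons g L' => exact ⟨g, L', rfl⟩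
  set front : List ((i : Bool) × M2 G K i) :=
    if g₀ = 1 then [] else [⟨true, g₀⟩] with hfront
  set ℓ : List ((i : Bool) × M2 G K i) := front ++ letters s b (g :: L') with hℓ
  obtain ⟨r, hr⟩ := letters_head (G := G) (K := K) s b g L'
  have hne1 : ∀ l ∈ ℓ, l.2 ≠ (1 : M2 G K l.1) := by
    intro l hl
    rw [hℓ, List.mem_append] at hl
    rcases hl with hl | hl
    · rw [hfront] at hl
      split at hl
      · simp at hl
      · simp only [List.mem_singleton] at hl
        subst hl
        next h0 => exact h0
    · exact letters_ne_one hs b _ l hl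
  have hchain : List.Chain' (fun l l' => l.1 ≠ l'.1) ℓ := by
    have hc := letters_chain (G := G) (K := K) s b (g :: L') hint
    rw [hℓ, hfront]
    split
    · simpa using hc
    · rw [hr] at hc ⊢
      exact List.IsChain.cons_cons (by simp) hc
  set w : CoprodI.Word (M2 G K) := ⟨ℓ, hne1, hchain⟩ with hw
  have hprod : w.prod = psi G K (inl g₀ * QW s b (g :: L')) := by
    show (ℓ.map fun l => CoprodI.of (M := M2 G K) l.2).prod = _
    rw [hℓ, List.map_append, List.prod_append, letters_prod, map_mul]
    congr 1
    rw [hfront]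
    split
    · next h0 => subst h0; simp
    · rw [psi_inl]; simp
  intro hcon
  have h1 : w.prod = CoprodI.Word.prod (CoprodI.Word.empty (M := M2 G K)) := by
    rw [hprod, hcon, map_one, CoprodI.Word.prod_empty]
  have h2 := word_prod_injective h1
  have h3 : ℓ = [] := congrArg CoprodI.Word.toList h2
  rw [hℓ] at h3
  exact letters_ne_nil s b g L' (List.append_eq_nil_iff.mp h3).2
lemma exists_decomp_of_mem_dropLast {L : List G} (h : (1 : G) ∈ L.dropLast) :
    ∃ u x v, L = u ++ (1 : G) :: x :: v := by
  have hL : L ≠ [] := by rintro rfl; simp at h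
  obtain ⟨u, w, hw⟩ := List.append_of_mem h
  have hL2 : L = u ++ (1 : G) :: (w ++ [L.getLast hL]) := by
    conv_lhs => rw [← List.dropLast_append_getLast hL]
    rw [hw]; simp
  cases w with
  | nil => exact ⟨u, L.getLast hL, [], by simpa using hL2⟩
  | cons x v => exact ⟨u, x, v ++ [L.getLast hL], by simpa using hL2⟩

lemma inl_eq_one_iff (g : G) : (inl g : Coprod G K) = 1 ↔ g = 1 :=
  Coprod.inl_injective.eq_iff' (map_one Coprod.inl)

theorem core {K' : Type} [Group K'] {s : Bool → K} {t : Bool → K'}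
    (hs : Good s) (ht : Good t) :
    ∀ (n : ℕ) (L : List G), L.length = n → ∀ (g₀ : G) (b c : Bool),
      ((inl g₀ * QW s b L = 1) ↔ (inl g₀ * QW t c L = 1)) := by
  intro n
  induction n using Nat.strong_induction_on with
  | _ n ih =>
    intro L hL g₀ b c
    rcases eq_or_ne L [] with rfl | hLne
    · show (inl g₀ * 1 = 1) ↔ (inl g₀ * 1 = 1)
      simp only [mul_one]
      rw [inl_eq_one_iff, inl_eq_one_iff]
    by_cases h1 : (1 : G) ∈ L.dropLast
    · obtain ⟨u, x, v, rfl⟩ := exists_decomp_of_mem_dropLast h1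
      rcases u.eq_nil_or_concat with rfl | ⟨u₀, y, rfl⟩
      · simp only [List.nil_append]
        rw [QW_red0 hs, QW_red0 ht, ← mul_assoc, ← mul_assoc, ← map_mul, ← map_mul]
        exact ih v.length (by subst hL; simp) v rfl (g₀ * x) b c
      · have he : u₀.concat y ++ (1 : G) :: x :: v = u₀ ++ y :: (1:G) :: x :: v := by simp
        rw [he, QW_red1 hs, QW_red1 ht]
        exact ih (u₀ ++ (y * x) :: v).length
          (by subst hL; simp) _ rfl g₀ b c
    · have hint : ∀ y ∈ L.dropLast, y ≠ 1 := by
        intro y hy hy1; exact h1 (hy1 ▸ hy)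
      exact iff_of_false (QW_ne_one hs g₀ b L hLne hint) (QW_ne_one ht g₀ c L hLne hint)
lemma eq_iff_inv_mul_eq_one {P : Type} [Group P] (x y : P) : x = y ↔ y⁻¹ * x = 1 := by
  constructor
  · rintro rfl; simp
  · intro h; have := inv_mul_eq_one.mp h; exact this.symm

theorem pair {K' : Type} [Group K'] {s : Bool → K} {t : Bool → K'}
    (hs : Good s) (ht : Good t) (g₀ g₀' : G) (L L' : List G) (b c : Bool) :
    (inl g₀ * QW s b L = inl g₀' * QW s b L') ↔ (inl g₀ * QW t c L = inl g₀' * QW t c L') := by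
  rcases L'.eq_nil_or_concat with rfl | ⟨u, y, rfl⟩
  · have hside : ∀ (P : Type) (_ : Group P) (sP : Bool → P) (bP : Bool),
        (inl g₀ * QW sP bP L = inl g₀' * QW sP bP []) ↔
          (inl (g₀'⁻¹ * g₀) * QW sP bP L = 1) := by
      intro P _ sP bP
      show inl g₀ * QW sP bP L = inl g₀' * 1 ↔ _
      rw [mul_one, eq_iff_inv_mul_eq_one, ← map_inv, ← mul_assoc, ← map_mul]
    rw [hside K _ s b, hside K' _ t c]
    exact core hs ht L.length L rfl (g₀'⁻¹ * g₀) b c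
  · have hside : ∀ (P : Type) (_ : Group P) (sP : Bool → P) (_ : Good sP) (bP : Bool),
        (inl g₀ * QW sP bP L = inl g₀' * QW sP bP (u.concat y)) ↔
          (inl y⁻¹ * QW sP (!(flipPow u.length bP))
            (((u.reverse.map (·⁻¹)) ++ [g₀'⁻¹ * g₀]) ++ L) = 1) := by
      intro P _ sP hsP bP
      rw [List.concat_eq_append, eq_iff_inv_mul_eq_one, QW_inv hsP u y g₀' bP]
      rw [QW_append sP _ ((u.reverse.map (·⁻¹)) ++ [g₀'⁻¹ * g₀]) L]
      have hflip : flipPow ((u.reverse.map (·⁻¹)) ++ [g₀'⁻¹ * g₀]).length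
          (!(flipPow u.length bP)) = bP := by
        simp only [List.length_append, List.length_map, List.length_reverse,
          List.length_cons, List.length_nil]
        show flipPow (u.length + 1) (!(flipPow u.length bP)) = bP
        show flipPow u.length (!(!(flipPow u.length bP))) = bP
        rw [Bool.not_not, flipPow_flipPow]
      rw [hflip]
      have hA : inl y⁻¹ * QW sP (!(flipPow u.length bP)) ((u.reverse.map (·⁻¹)) ++ [g₀'⁻¹])
            * (inl g₀ * QW sP bP L)
          = inl y⁻¹ * (QW sP (!(flipPow u.length bP))
              ((u.reverse.map (·⁻¹)) ++ [g₀'⁻¹ * g₀]) * QW sP bP L) := by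
        rw [← QW_concat_mul_inl sP (!(flipPow u.length bP)) (u.reverse.map (·⁻¹)) g₀'⁻¹ g₀]
        simp [mul_assoc]
      rw [hA]
    rw [hside K _ s hs b, hside K' _ t ht c]
    exact core hs ht _ _ rfl y⁻¹ _ _

section Words
open Monoid Coprod

variable {G H : Type} [Group G] [Group H]

/-- The sign function for the `ZMod 2` side. -/
def s2 : Bool → Multiplicative (ZMod 2) := fun _ => Multiplicative.ofAdd 1

lemma good_s2 : Good (s2) := by
  constructor
  · intro b; cases b <;> decide
  · intro b; cases b <;> decide

/-- The sign function for the `H` side. -/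
def sH (h : H) : Bool → H := fun b => cond b h h⁻¹

lemma good_sH {h : H} (hh : h ≠ 1) : Good (sH h) := by
  constructor
  · intro b; cases b
    · simpa [sH] using inv_ne_one.mpr hh
    · simpa [sH] using hh
  · intro b; cases b <;> simp [sH]

/-- Canonical decomposition of a word: the leading `G`-block and the list of `G`-blocks
separated by odd `Sum.inr` letters. -/
def decomp (ν : ℕ → G) : List (ℕ ⊕ ℕ) → G × List G
  | [] => (1, [])
  | Sum.inl k :: l => ((ν k) * (decomp ν l).1, (decomp ν l).2)
  | Sum.inr n :: l =>
      if n % 2 = 0 then decomp ν l else (1, (decomp ν l).1 :: (decomp ν l).2)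

lemma freeEval_nil {α : Type} (ν : α → G) (μ : ℕ → H) : freeEval ν μ [] = 1 := rfl

lemma freeEval_cons {α : Type} (ν : α → G) (μ : ℕ → H) (x : α ⊕ ℕ) (l : List (α ⊕ ℕ)) :
    freeEval ν μ (x :: l)
      = Sum.elim (fun a => (inl (ν a) : Coprod G H)) (fun n => inr (μ n)) x * freeEval ν μ l := by
  simp [freeEval]

lemma zmod2_cast_even {n : ℕ} (h : n % 2 = 0) : ((n : ZMod 2) : ZMod 2) = 0 := by
  rw [← ZMod.natCast_mod, h]; rfl

lemma zmod2_cast_odd {n : ℕ} (h : ¬ n % 2 = 0) : ((n : ZMod 2) : ZMod 2) = 1 := by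
  have h1 : n % 2 = 1 := Nat.mod_two_eq_zero_or_one n |>.resolve_left h
  rw [← ZMod.natCast_mod, h1]; rfl

lemma eval2_eq (ν : ℕ → G) (l : List (ℕ ⊕ ℕ)) (b : Bool) :
    freeEval ν (fun n => (Multiplicative.ofAdd (n : ZMod 2))) l
      = inl (decomp ν l).1 * QW s2 b (decomp ν l).2 := by
  induction l generalizing b with
  | nil => simp [freeEval_nil, decomp, QW]
  | cons x l ih =>
      rcases x with k | n
      · rw [freeEval_cons, show decomp ν (Sum.inl k :: l)
            = ((ν k) * (decomp ν l).1, (decomp ν l).2) from rfl]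
        rw [ih b]
        simp [mul_assoc]
      · rw [freeEval_cons]
        by_cases hn : n % 2 = 0
        · rw [show decomp ν (Sum.inr n :: l) = decomp ν l from if_pos hn, ih b]
          have : Multiplicative.ofAdd ((n : ZMod 2)) = 1 := by
            rw [show ((n : ZMod 2)) = 0 from zmod2_cast_even hn]; rfl
          simp [this]
        · rw [show decomp ν (Sum.inr n :: l)
              = (1, (decomp ν l).1 :: (decomp ν l).2) from if_neg hn, ih (!b)]
          have : Multiplicative.ofAdd ((n : ZMod 2)) = s2 b := by
            rw [show ((n : ZMod 2)) = 1 from zmod2_cast_odd hn]; rfl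
          simp only [Sum.elim_inr]
          rw [this]
          show inr (s2 b) * (inl (decomp ν l).1 * QW s2 (!b) (decomp ν l).2)
            = inl 1 * QW s2 b ((decomp ν l).1 :: (decomp ν l).2)
          rw [show (QW s2 b ((decomp ν l).1 :: (decomp ν l).2) : Coprod G (Multiplicative (ZMod 2)))
            = inr (s2 b) * inl (decomp ν l).1 * QW s2 (!b) (decomp ν l).2 from rfl]
          simp [mul_assoc]

/-- The word transformation substituting alternating `h`, `h⁻¹` for the order-2 generator. -/
def trf (c₁ c₂ : ℕ) : Bool → List (ℕ ⊕ ℕ) → List (ℕ ⊕ ℕ)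
  | _, [] => []
  | b, Sum.inl k :: l => Sum.inl k :: trf c₁ c₂ b l
  | b, Sum.inr n :: l =>
      if n % 2 = 0 then trf c₁ c₂ b l else Sum.inr (cond b c₁ c₂) :: trf c₁ c₂ (!b) l

lemma evalH_eq (ν : ℕ → G) (μ : ℕ → H) (h : H) (c₁ c₂ : ℕ)
    (hc₁ : μ c₁ = h) (hc₂ : μ c₂ = h⁻¹) (l : List (ℕ ⊕ ℕ)) (b : Bool) :
    freeEval ν μ (trf c₁ c₂ b l) = inl (decomp ν l).1 * QW (sH h) b (decomp ν l).2 := by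
  induction l generalizing b with
  | nil => simp [trf, freeEval_nil, decomp, QW]
  | cons x l ih =>
      rcases x with k | n
      · rw [show trf c₁ c₂ b (Sum.inl k :: l) = Sum.inl k :: trf c₁ c₂ b l from rfl,
          freeEval_cons, ih b,
          show decomp ν (Sum.inl k :: l) = ((ν k) * (decomp ν l).1, (decomp ν l).2) from rfl]
        simp [mul_assoc]
      · by_cases hn : n % 2 = 0
        · rw [show trf c₁ c₂ b (Sum.inr n :: l) = trf c₁ c₂ b l from if_pos hn, ih b,
            show decomp ν (Sum.inr n :: l) = decomp ν l from if_pos hn]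
        · rw [show trf c₁ c₂ b (Sum.inr n :: l)
              = Sum.inr (cond b c₁ c₂) :: trf c₁ c₂ (!b) l from if_neg hn,
            freeEval_cons, ih (!b),
            show decomp ν (Sum.inr n :: l)
              = (1, (decomp ν l).1 :: (decomp ν l).2) from if_neg hn]
          have hμ : μ (cond b c₁ c₂) = sH h b := by cases b <;> simp [sH, hc₁, hc₂]
          show inr (μ (cond b c₁ c₂)) * (inl (decomp ν l).1 * QW (sH h) (!b) (decomp ν l).2)
            = inl 1 * QW (sH h) b ((decomp ν l).1 :: (decomp ν l).2)
          rw [hμ, show (QW (sH h) b ((decomp ν l).1 :: (decomp ν l).2) : Coprod G H)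
            = inr (sH h b) * inl (decomp ν l).1 * QW (sH h) (!b) (decomp ν l).2 from rfl]
          simp [mul_assoc]

end Words


section Comp
open Monoid Coprod

/-- One step of the word transformation, in `foldl` form. -/
def trStep (c₁ c₂ : ℕ) (p : Bool × List (ℕ ⊕ ℕ)) (x : ℕ ⊕ ℕ) : Bool × List (ℕ ⊕ ℕ) :=
  Sum.casesOn x (fun k => (p.1, Sum.inl k :: p.2))
    (fun n => if n % 2 = 0 then p else (!p.1, Sum.inr (cond p.1 c₁ c₂) :: p.2))

/-- The word transformation, as a total function. -/
def trF (c₁ c₂ : ℕ) (l : List (ℕ ⊕ ℕ)) : List (ℕ ⊕ ℕ) :=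
  ((l.foldl (trStep c₁ c₂) (false, [])).2).reverse

lemma foldl_trStep (c₁ c₂ : ℕ) :
    ∀ (l : List (ℕ ⊕ ℕ)) (b : Bool) (acc : List (ℕ ⊕ ℕ)),
      (l.foldl (trStep c₁ c₂) (b, acc)).2 = (trf c₁ c₂ b l).reverse ++ acc := by
  intro l
  induction l with
  | nil => intro b acc; simp [trf]
  | cons x l ih =>
      intro b acc
      rcases x with k | n
      · rw [List.foldl_cons,
          show trStep c₁ c₂ (b, acc) (Sum.inl k) = (b, Sum.inl k :: acc) from rfl, ih,
          show trf c₁ c₂ b (Sum.inl k :: l) = Sum.inl k :: trf c₁ c₂ b l from rfl]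
        simp
      · by_cases hn : n % 2 = 0
        · rw [List.foldl_cons,
            show trStep c₁ c₂ (b, acc) (Sum.inr n) = (b, acc) from by
              simp [trStep, if_pos hn], ih,
            show trf c₁ c₂ b (Sum.inr n :: l) = trf c₁ c₂ b l from if_pos hn]
        · rw [List.foldl_cons,
            show trStep c₁ c₂ (b, acc) (Sum.inr n)
              = (!b, Sum.inr (cond b c₁ c₂) :: acc) from by simp [trStep, if_neg hn], ih,
            show trf c₁ c₂ b (Sum.inr n :: l)
              = Sum.inr (cond b c₁ c₂) :: trf c₁ c₂ (!b) l from if_neg hn]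
          simp

lemma trF_eq (c₁ c₂ : ℕ) (l : List (ℕ ⊕ ℕ)) : trF c₁ c₂ l = trf c₁ c₂ false l := by
  rw [trF, foldl_trStep]
  simp

abbrev St := Bool × List (ℕ ⊕ ℕ)

lemma trStep_primrec (c₁ c₂ : ℕ) : Primrec₂ (trStep c₁ c₂) := by
  have hfstfst : Primrec fun a : St × (ℕ ⊕ ℕ) => a.1.1 := Primrec.fst.comp Primrec.fst
  have hsndfst : Primrec fun a : St × (ℕ ⊕ ℕ) => a.1.2 := Primrec.snd.comp Primrec.fst
  have hg : Primrec₂ fun (a : St × (ℕ ⊕ ℕ)) (k : ℕ) => ((a.1.1, Sum.inl k :: a.1.2) : St) :=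
    (Primrec.pair (hfstfst.comp Primrec.fst)
      (Primrec.list_cons.comp (Primrec.sumInl.comp Primrec.snd)
        (hsndfst.comp Primrec.fst))).to₂
  have hc : PrimrecPred fun (q : (St × (ℕ ⊕ ℕ)) × ℕ) => q.2 % 2 = 0 :=
    PrimrecRel.comp Primrec.eq
      (Primrec.nat_mod.comp Primrec.snd (Primrec.const 2)) (Primrec.const 0)
  have hthen : Primrec fun (q : (St × (ℕ ⊕ ℕ)) × ℕ) => q.1.1 :=
    Primrec.fst.comp Primrec.fst
  have hcondb : Primrec fun (q : (St × (ℕ ⊕ ℕ)) × ℕ) => cond q.1.1.1 c₁ c₂ :=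
    Primrec.cond (hfstfst.comp Primrec.fst) (Primrec.const c₁) (Primrec.const c₂)
  have helse : Primrec fun (q : (St × (ℕ ⊕ ℕ)) × ℕ) =>
      ((!q.1.1.1, Sum.inr (cond q.1.1.1 c₁ c₂) :: q.1.1.2) : St) :=
    Primrec.pair (Primrec.not.comp (hfstfst.comp Primrec.fst))
      (Primrec.list_cons.comp (Primrec.sumInr.comp hcondb) (hsndfst.comp Primrec.fst))
  have hh : Primrec₂ fun (a : St × (ℕ ⊕ ℕ)) (n : ℕ) =>
      if n % 2 = 0 then a.1 else ((!a.1.1, Sum.inr (cond a.1.1 c₁ c₂) :: a.1.2) : St) :=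
    (Primrec.ite hc hthen helse).to₂
  exact (Primrec.sumCasesOn Primrec.snd hg hh).to₂

set_option maxHeartbeats 1000000 in
lemma trF_primrec (c₁ c₂ : ℕ) : Primrec (trF c₁ c₂) := by
  have h1 : Primrec fun l : List (ℕ ⊕ ℕ) =>
      l.foldl (fun s b => trStep c₁ c₂ s b) ((false, []) : Bool × List (ℕ ⊕ ℕ)) :=
    Primrec.list_foldl Primrec.id (Primrec.const _)
      ((Primrec₂.comp (trStep_primrec c₁ c₂) (Primrec.fst.comp Primrec.snd) (Primrec.snd.comp Primrec.snd)).to₂)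
  have h2 := Primrec.list_reverse.comp (Primrec.snd.comp h1)
  exact h2.of_eq fun l => rfl

lemma trF_computable (c₁ c₂ : ℕ) : Computable (trF c₁ c₂) := (trF_primrec c₁ c₂).to_comp

end Comp


lemma universal_of_reduction {β γ : Type} [Primcodable β] [Primcodable γ]
    {R : β → β → Prop} {S : γ → γ → Prop} (hU : Universal R) (hRS : Reduction R S) :
    Universal S := by
  intro E hE
  obtain ⟨f, hf, h1⟩ := hU E hE
  obtain ⟨g, hg, h2⟩ := hRS
  exact ⟨g ∘ f, hg.comp hf, fun a b => (h1 a b).trans (h2 (f a) (f b))⟩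

theorem transfer {G : Type} [Group G] (ν : ℕ → G)
    (hU : Universal (WP (freeEval ν fun n => (Multiplicative.ofAdd (n : ZMod 2)))))
    (H : Type) [Group H] (hnt : Nontrivial H) (μ : ℕ → H) (hμ : Function.Surjective μ) :
    Universal (WP (freeEval ν μ)) := by
  obtain ⟨h, hh⟩ := exists_ne (1 : H)
  obtain ⟨c₁, hc₁⟩ := hμ h
  obtain ⟨c₂, hc₂⟩ := hμ h⁻¹
  apply universal_of_reduction hU
  refine ⟨trF c₁ c₂, trF_computable c₁ c₂, ?_⟩
  intro l l'
  show freeEval ν _ l = freeEval ν _ l'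
    ↔ freeEval ν μ (trF c₁ c₂ l) = freeEval ν μ (trF c₁ c₂ l')
  rw [trF_eq, trF_eq, eval2_eq ν l false, eval2_eq ν l' false,
    evalH_eq ν μ h c₁ c₂ hc₁ hc₂ l false, evalH_eq ν μ h c₁ c₂ hc₁ hc₂ l' false]
  exact pair good_s2 (good_sH hh) _ _ _ _ false false

end SU

/-- `G` is ∗-universal iff the word problem of `G` is not a universal ceer but the word
problem of `G ∗ (ℤ/2ℤ)` is a universal ceer. -/
theorem stmt6 {G : Type} [Group G] (ν : ℕ → G) (hν : Function.Surjective ν)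
    (hce : Ceer (WP ν)) :
    StarUniversal ν ↔
      ¬ Universal (WP ν) ∧
        Universal (WP (freeEval ν fun n => (Multiplicative.ofAdd (n : ZMod 2)))) := by
  constructor
  · rintro ⟨h1, h2⟩
    refine ⟨h1, ?_⟩
    have hnt : Nontrivial (Multiplicative (ZMod 2)) :=
      ⟨⟨Multiplicative.ofAdd 0, Multiplicative.ofAdd 1, by decide⟩⟩
    have hsurj : Function.Surjective (fun n : ℕ => (Multiplicative.ofAdd (n : ZMod 2))) := by
      intro x
      obtain ⟨n, hn⟩ := ZMod.natCast_zmod_surjective (n := 2) (Multiplicative.toAdd x)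
      exact ⟨n, by simp [hn]⟩
    exact h2 (Multiplicative (ZMod 2)) inferInstance hnt _ hsurj
  · rintro ⟨h1, hU⟩
    refine ⟨h1, ?_⟩
    intro H hH hnt μ hμ
    exact SU.transfer ν hU H hnt μ hμ
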